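/- Let {x_k} ⊂ ℝ be a sequence converging to x_∞, let q be a positive integer, and let f : ℝ² → ℝ be continuous at (x_∞, 0). Let {w_k} ⊂ ℝ be defined by w_{k+1} = w_k (1 − w_k^q f(x_k, w_k)) for all k = 0, 1, …, and assume w_k > 0 for all k and w_k → 0 as k → ∞. Then lim_{k→∞} 1/(k w_k^q) = q f(x_∞, 0). In particular, if f(x_∞, 0) ≠ 0, then there exist constants c₁, c₂ > 0 and N ∈ ℕ such that c₁ k^{−1/q} ≤ w_k ≤ c₂ k^{−1/q} for all k ≥ N. -/

import Mathlib

open Filter Topology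

/-- (L4) Let `x_k → x_∞`, `q ≥ 1`, `f : ℝ² → ℝ` continuous at `(x_∞, 0)`, and let
`w_{k+1} = w_k (1 − w_k^q f(x_k, w_k))` with `w_k > 0` and `w_k → 0`. Then
`lim 1/(k w_k^q) = q f(x_∞, 0)`; in particular, if `f(x_∞, 0) ≠ 0`, then
`w_k = Θ(k^{−1/q})`. -/
theorem stmt9 (x : ℕ → ℝ) (xinf : ℝ) (hx : Tendsto x atTop (𝓝 xinf))
    (q : ℕ) (hq : 1 ≤ q) (f : ℝ × ℝ → ℝ) (hf : ContinuousAt f (xinf, 0))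
    (w : ℕ → ℝ) (hrec : ∀ k, w (k + 1) = w k * (1 - w k ^ q * f (x k, w k)))
    (hpos : ∀ k, 0 < w k) (hw : Tendsto w atTop (𝓝 0)) :
    Tendsto (fun k : ℕ => 1 / ((k : ℝ) * w k ^ q)) atTop (𝓝 ((q : ℝ) * f (xinf, 0)))
    ∧ (f (xinf, 0) ≠ 0 →
        ∃ c₁ c₂ : ℝ, 0 < c₁ ∧ 0 < c₂ ∧ ∃ N : ℕ, ∀ k, N ≤ k →
          c₁ * (k : ℝ) ^ (-(1 : ℝ) / q) ≤ w k ∧ w k ≤ c₂ * (k : ℝ) ^ (-(1 : ℝ) / q)) := by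
  set L := f (xinf, 0) with hL
  set e : ℕ → ℝ := fun k => w k ^ q * f (x k, w k) with he
  have hfk : Tendsto (fun k => f (x k, w k)) atTop (𝓝 L) := by
    have : Tendsto (fun k => (x k, w k)) atTop (𝓝 (xinf, 0)) := hx.prodMk_nhds hw
    exact hf.tendsto.comp this
  have hwq : Tendsto (fun k => w k ^ q) atTop (𝓝 0) := by
    simpa [zero_pow (by omega : q ≠ 0)] using hw.pow q
  have hek : Tendsto e atTop (𝓝 0) := by
    simpa using hwq.mul hfk
  have h1e : ∀ k, 0 < 1 - e k := by
    intro k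
    have h := hpos (k + 1)
    rw [hrec k] at h
    rcases mul_pos_iff.mp h with ⟨_, h2⟩ | ⟨h2, _⟩
    · exact h2
    · linarith [hpos k]
  set u : ℕ → ℝ := fun k => (w k ^ q)⁻¹ with hu
  set d : ℕ → ℝ := fun k => f (x k, w k) * (∑ i ∈ Finset.range q, (1 - e k) ^ i) / (1 - e k) ^ q
    with hd
  have key : ∀ k, u (k + 1) - u k = d k := by
    intro k
    have hw0 : w k ≠ 0 := (hpos k).ne'
    have h10 : (1 - w k ^ q * f (x k, w k)) ≠ 0 := by simpa only [he] using (h1e k).ne'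
    have hP : 1 - (1 - w k ^ q * f (x k, w k)) ^ q
        = (w k ^ q * f (x k, w k)) *
          (∑ i ∈ Finset.range q, (1 - w k ^ q * f (x k, w k)) ^ i) := by
      linear_combination geom_sum_mul (1 - w k ^ q * f (x k, w k)) q
    simp only [hu, hd, hrec k, he, mul_pow]
    rw [mul_inv, eq_div_iff (pow_ne_zero q h10)]
    field_simp
    linear_combination hP
  have hdL : Tendsto d atTop (𝓝 ((q : ℝ) * L)) := by
    have hsum : Tendsto (fun k => ∑ i ∈ Finset.range q, (1 - e k) ^ i) atTop (𝓝 (q : ℝ)) := by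
      have hc : Continuous fun t : ℝ => ∑ i ∈ Finset.range q, (1 - t) ^ i := by continuity
      have := (hc.tendsto 0).comp hek
      simpa [Function.comp_def] using this
    have hpow : Tendsto (fun k => (1 - e k) ^ q) atTop (𝓝 1) := by
      have hc : Continuous fun t : ℝ => (1 - t) ^ q := by continuity
      have := (hc.tendsto 0).comp hek
      simpa [Function.comp_def] using this
    have := (hfk.mul hsum).div hpow one_ne_zero
    rw [div_one, mul_comm L] at this
    exact this
  have hces := hdL.cesaro
  have htel : ∀ n : ℕ, ∑ i ∈ Finset.range n, d i = u n - u 0 := by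
    intro n
    rw [← Finset.sum_range_sub u n]
    exact Finset.sum_congr rfl fun i _ => (key i).symm
  have hmain : Tendsto (fun k : ℕ => 1 / ((k : ℝ) * w k ^ q)) atTop (𝓝 ((q : ℝ) * L)) := by
    have h0 : Tendsto (fun n : ℕ => (n : ℝ)⁻¹ * u 0) atTop (𝓝 0) := by
      simpa using (tendsto_inv_atTop_nhds_zero_nat.mul_const (u 0))
    have h := hces.add h0
    rw [add_zero] at h
    apply h.congr
    intro n
    rw [htel n]
    simp only [hu]
    rw [one_div, mul_inv]
    ring
  refine ⟨hmain, fun hL0 => ?_⟩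
  have hT : 0 < (q : ℝ) * L := by
    have hqR : (1:ℝ) ≤ (q:ℝ) := by exact_mod_cast hq
    rcases lt_or_gt_of_ne hL0 with h | h
    · exfalso
      have hge : (0 : ℝ) ≤ (q : ℝ) * L := by
        apply le_of_tendsto_of_tendsto' tendsto_const_nhds hmain
        intro k
        have h1 := hpos k
        positivity
      nlinarith
    · positivity
  set T := (q : ℝ) * L with hTdef
  have hev : ∀ᶠ k : ℕ in atTop,
      T / 2 < 1 / ((k : ℝ) * w k ^ q) ∧ 1 / ((k : ℝ) * w k ^ q) < 3 * T / 2 := by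
    have h1 := hmain.eventually (eventually_gt_nhds (by linarith : T / 2 < T))
    have h2 := hmain.eventually (eventually_lt_nhds (by linarith : T < 3 * T / 2))
    filter_upwards [h1, h2] with k hk1 hk2 using ⟨hk1, hk2⟩
  obtain ⟨N', hN'⟩ := eventually_atTop.mp hev
  refine ⟨(2 / (3 * T)) ^ ((q : ℝ)⁻¹), (2 / T) ^ ((q : ℝ)⁻¹), by positivity, by positivity,
    max N' 1, ?_⟩
  intro k hk
  have hk1 : 1 ≤ k := le_trans (le_max_right _ _) hk
  have hkR : (0 : ℝ) < k := by exact_mod_cast hk1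
  obtain ⟨hlow, hhigh⟩ := hN' k (le_trans (le_max_left _ _) hk)
  have hwq0 : 0 < w k ^ q := pow_pos (hpos k) q
  have hkw : 0 < (k : ℝ) * w k ^ q := by positivity
  have hform : ∀ c s : ℝ, 0 < s → c / s * (k : ℝ)⁻¹ = c / (s * k) := by
    intro c s hs
    field_simp
  have hub : w k ^ q ≤ (2 / T) * (k : ℝ)⁻¹ := by
    rw [hform 2 T hT, le_div_iff₀ (by positivity : (0:ℝ) < T * k)]
    have h1 : T / 2 * ((k : ℝ) * w k ^ q) < 1 := (lt_div_iff₀ hkw).mp hlow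
    nlinarith
  have hlb : (2 / (3 * T)) * (k : ℝ)⁻¹ ≤ w k ^ q := by
    rw [hform 2 (3 * T) (by positivity), div_le_iff₀ (by positivity : (0:ℝ) < 3 * T * k)]
    have h1 : (1 : ℝ) < 3 * T / 2 * ((k : ℝ) * w k ^ q) := (div_lt_iff₀ hkw).mp hhigh
    nlinarith
  have hq0 : q ≠ 0 := by omega
  have hwrp : (w k ^ q) ^ ((q : ℝ)⁻¹) = w k := Real.pow_rpow_inv_natCast (hpos k).le hq0
  have hexp : -(1 : ℝ) / q = -(q : ℝ)⁻¹ := by ring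
  constructor
  · calc (2 / (3 * T)) ^ ((q : ℝ)⁻¹) * (k : ℝ) ^ (-(1 : ℝ) / q)
        = ((2 / (3 * T)) * (k : ℝ)⁻¹) ^ ((q : ℝ)⁻¹) := by
          rw [hexp, Real.rpow_neg hkR.le, ← Real.inv_rpow hkR.le,
            Real.mul_rpow (by positivity) (by positivity)]
      _ ≤ (w k ^ q) ^ ((q : ℝ)⁻¹) := Real.rpow_le_rpow (by positivity) hlb (by positivity)
      _ = w k := hwrp
  · calc w k = (w k ^ q) ^ ((q : ℝ)⁻¹) := hwrp.symm
      _ ≤ ((2 / T) * (k : ℝ)⁻¹) ^ ((q : ℝ)⁻¹) :=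
          Real.rpow_le_rpow (by positivity) hub (by positivity)
      _ = (2 / T) ^ ((q : ℝ)⁻¹) * (k : ℝ) ^ (-(1 : ℝ) / q) := by
          rw [hexp, Real.rpow_neg hkR.le, ← Real.inv_rpow hkR.le,
            Real.mul_rpow (by positivity) (by positivity)]
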